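/- Let B ∈ ℝ^{n×n} be a symmetric positive definite matrix with smallest eigenvalue λ_min and largest eigenvalue λ_max. Then for every symmetric matrix M ∈ ℝ^{n×n} one has |BM|² ≤ (λ_max/λ_min)²·⟨BM,(BM)ᵀ⟩. -/

import Mathlib

open Matrix

lemma aux_sum_sq_eq_trace {m : ℕ} (X : Matrix (Fin m) (Fin m) ℝ) :
    (∑ i, ∑ j, X i j ^ 2) = Matrix.trace (X * Xᵀ) := by
  simp [Matrix.trace, Matrix.mul_apply, Matrix.diag, sq]

lemma aux_sum_mul_eq_trace {m : ℕ} (X : Matrix (Fin m) (Fin m) ℝ) :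
    (∑ i, ∑ j, X i j * (Xᵀ) i j) = Matrix.trace (X * X) := by
  simp only [Matrix.trace, Matrix.diag, Matrix.mul_apply, Matrix.transpose_apply]

lemma aux_conj_trace {m : ℕ} (U E F : Matrix (Fin m) (Fin m) ℝ)
    (hUU : Uᵀ * U = 1) :
    Matrix.trace ((U * E * Uᵀ) * (U * F * Uᵀ)) = Matrix.trace (E * F) := by
  have h : (U * E * Uᵀ) * (U * F * Uᵀ) = U * (E * F) * Uᵀ := by
    simp only [Matrix.mul_assoc]
    rw [← Matrix.mul_assoc Uᵀ U (F * Uᵀ), hUU, Matrix.one_mul]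
  rw [h, Matrix.trace_mul_cycle, ← Matrix.mul_assoc, hUU, Matrix.one_mul]

theorem stmt_3 (n : ℕ) (hn : 1 ≤ n) (B : Matrix (Fin n) (Fin n) ℝ)
    (hBs : B.IsSymm) (hB : B.PosDef) (lmin lmax : ℝ)
    (hmin : IsLeast (Set.range hB.isHermitian.eigenvalues) lmin)
    (hmax : IsGreatest (Set.range hB.isHermitian.eigenvalues) lmax) :
    ∀ M : Matrix (Fin n) (Fin n) ℝ, M.IsSymm →
      (∑ i, ∑ j, (B * M) i j ^ 2) ≤
        (lmax / lmin) ^ 2 * (∑ i, ∑ j, (B * M) i j * ((B * M)ᵀ) i j) := by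
  classical
  intro M hM
  set d : Fin n → ℝ := hB.isHermitian.eigenvalues with hd
  set U : Matrix (Fin n) (Fin n) ℝ := (hB.isHermitian.eigenvectorUnitary : Matrix (Fin n) (Fin n) ℝ) with hUdef
  have hsp : B = U * Matrix.diagonal d * Uᵀ := by
    have h := hB.isHermitian.spectral_theorem
    simpa [star_eq_conjTranspose, conjTranspose_eq_transpose_of_trivial] using h
  have hUU : Uᵀ * U = 1 := by
    have h := (Matrix.mem_unitaryGroup_iff').mp (hB.isHermitian.eigenvectorUnitary).2
    simpa [star_eq_conjTranspose, conjTranspose_eq_transpose_of_trivial] using h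
  have hUU' : U * Uᵀ = 1 := by
    have h := (Matrix.mem_unitaryGroup_iff).mp (hB.isHermitian.eigenvectorUnitary).2
    simpa [star_eq_conjTranspose, conjTranspose_eq_transpose_of_trivial] using h
  set A : Matrix (Fin n) (Fin n) ℝ := Uᵀ * M * U with hAdef
  have hAs : Aᵀ = A := by
    rw [hAdef]
    rw [transpose_mul, transpose_mul, transpose_transpose, hM.eq, Matrix.mul_assoc]
  set E : Matrix (Fin n) (Fin n) ℝ := Matrix.diagonal d * A with hEdef
  have hE : ∀ i j, E i j = d i * A i j := by
    intro i j; rw [hEdef]; simp [Matrix.mul_apply, Matrix.diagonal_apply]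
  have hBM : B * M = U * E * Uᵀ := by
    rw [hsp, hEdef, hAdef]
    calc U * Matrix.diagonal d * Uᵀ * M
        = U * Matrix.diagonal d * Uᵀ * (M * (U * Uᵀ)) := by rw [hUU', Matrix.mul_one]
      _ = U * (Matrix.diagonal d * (Uᵀ * M * U)) * Uᵀ := by
          simp only [Matrix.mul_assoc]
  have key1 : (∑ i, ∑ j, (B * M) i j ^ 2) = ∑ i, ∑ j, d i ^ 2 * A i j ^ 2 := by
    rw [aux_sum_sq_eq_trace, hBM]
    have ht : (U * E * Uᵀ)ᵀ = U * Eᵀ * Uᵀ := by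
      simp [Matrix.transpose_mul, Matrix.mul_assoc]
    rw [ht, aux_conj_trace U E Eᵀ hUU]
    simp only [Matrix.trace, Matrix.diag, Matrix.mul_apply, Matrix.transpose_apply]
    refine Finset.sum_congr rfl fun i _ => Finset.sum_congr rfl fun j _ => ?_
    rw [hE]; ring
  have key2 : (∑ i, ∑ j, (B * M) i j * ((B * M)ᵀ) i j) = ∑ i, ∑ j, (d i * d j) * A i j ^ 2 := by
    rw [aux_sum_mul_eq_trace, hBM, aux_conj_trace U E E hUU]
    simp only [Matrix.trace, Matrix.diag, Matrix.mul_apply]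
    rw [Finset.sum_comm]
    refine Finset.sum_congr rfl fun i _ => Finset.sum_congr rfl fun j _ => ?_
    have hAji : A j i = A i j := congrFun (congrFun hAs i) j
    rw [hE, hE, hAji]; ring
  rw [key1, key2, Finset.mul_sum]
  have hpos : ∀ i, 0 < d i := hB.eigenvalues_pos
  have hminpos : 0 < lmin := by
    obtain ⟨i, hi⟩ := hmin.1
    rw [← hi]; exact hpos i
  have hle : ∀ i, lmin ≤ d i := fun i => hmin.2 ⟨i, rfl⟩
  have hge : ∀ i, d i ≤ lmax := fun i => hmax.2 ⟨i, rfl⟩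
  refine Finset.sum_le_sum fun i _ => ?_
  rw [Finset.mul_sum]
  refine Finset.sum_le_sum fun j _ => ?_
  have hA2 : (0:ℝ) ≤ A i j ^ 2 := sq_nonneg _
  have hlm : lmin ≤ lmax := le_trans (hle i) (hge i)
  have key : d i ^ 2 ≤ (lmax / lmin) ^ 2 * (d i * d j) := by
    rw [div_pow, div_mul_eq_mul_div, le_div_iff₀ (by positivity)]
    have h1 : lmin * lmin ≤ lmax * d j :=
      mul_le_mul hlm (hle j) hminpos.le (le_trans hminpos.le hlm)
    have h2 : d i * (lmin * lmin) ≤ lmax * (lmax * d j) :=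
      mul_le_mul (hge i) h1 (by positivity) (le_trans hminpos.le hlm)
    nlinarith [mul_le_mul_of_nonneg_left h2 (hpos i).le, hpos i]
  calc d i ^ 2 * A i j ^ 2 ≤ ((lmax / lmin) ^ 2 * (d i * d j)) * A i j ^ 2 :=
        mul_le_mul_of_nonneg_right key hA2
    _ = (lmax / lmin) ^ 2 * (d i * d j * A i j ^ 2) := by ring
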